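/- Let m ≥ 1 and let A₁, …, A_m be elements of 𝔄. Then for every positive integer n, ‖exp(∑_{j=1}^m A_j) − fₙ({A_j})‖ ≤ (2·3^m/n) · (∑_{j=1}^m ‖A_j‖)² · exp(((n+2)/n) · ∑_{j=1}^m ‖A_j‖). -/

import Mathlib

open Filter NormedSpace

/-! ### Auxiliary real-analytic lemmas -/

lemma real_exp_tail (t : ℝ) :
    Real.exp t - 1 - t = ∑' k : ℕ, t ^ (k + 2) / (Nat.factorial (k + 2)) := by
  have hs : Summable (fun k : ℕ => t ^ k / (Nat.factorial k)) := Real.summable_pow_div_factorial t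
  have h := Summable.sum_add_tsum_nat_add 2 hs
  have hexp : Real.exp t = ∑' k : ℕ, t ^ k / (Nat.factorial k) := by
    rw [Real.exp_eq_exp_ℝ, NormedSpace.exp_eq_tsum_div]
  rw [hexp, ← h]
  simp [Finset.sum_range_succ]
  ring

lemma nat_fact_ineq (k : ℕ) : 2 * Nat.factorial k ≤ Nat.factorial (k + 2) := by
  rw [Nat.factorial_succ]
  calc 2 * Nat.factorial k ≤ (k + 2) * Nat.factorial (k + 1) :=
        Nat.mul_le_mul (by omega) (Nat.factorial_le (by omega))

lemma real_exp_remainder {t : ℝ} (ht : 0 ≤ t) :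
    Real.exp t - 1 - t ≤ t ^ 2 / 2 * Real.exp t := by
  rw [real_exp_tail]
  have hexp : Real.exp t = ∑' k : ℕ, t ^ k / (Nat.factorial k) := by
    rw [Real.exp_eq_exp_ℝ, NormedSpace.exp_eq_tsum_div]
  have hs : Summable (fun k : ℕ => t ^ k / (Nat.factorial k)) := Real.summable_pow_div_factorial t
  have h1 : Summable (fun k : ℕ => t ^ (k + 2) / (Nat.factorial (k + 2))) := by
    simpa using (summable_nat_add_iff 2).2 hs
  calc ∑' k : ℕ, t ^ (k + 2) / (Nat.factorial (k + 2))
      ≤ ∑' k : ℕ, t ^ 2 / 2 * (t ^ k / (Nat.factorial k)) := by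
        refine Summable.tsum_le_tsum (fun k => ?_) h1 (hs.mul_left _)
        have h2 : (2 : ℝ) * Nat.factorial k ≤ Nat.factorial (k + 2) := by
          exact_mod_cast Nat.cast_le.2 (nat_fact_ineq k)
        have hf1 : (0:ℝ) < Nat.factorial k := by positivity
        have hf2 : (0:ℝ) < Nat.factorial (k + 2) := by positivity
        rw [pow_add, div_le_iff₀ hf2, mul_comm (t ^ k)]
        have key : t ^ 2 / 2 * (t ^ k / Nat.factorial k) * (2 * Nat.factorial k)
            ≤ t ^ 2 / 2 * (t ^ k / Nat.factorial k) * Nat.factorial (k + 2) :=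
          mul_le_mul_of_nonneg_left h2 (by positivity)
        calc t ^ 2 * t ^ k = t ^ 2 / 2 * (t ^ k / Nat.factorial k) * (2 * Nat.factorial k) := by
              field_simp
          _ ≤ _ := key
    _ = t ^ 2 / 2 * Real.exp t := by rw [hexp, tsum_mul_left]

/-! ### The `IsGood` framework: quantitative first-order approximation of products of
exponential-like elements. -/

section IsGoodFramework

variable {𝕜 : Type*} [RCLike 𝕜] {𝔄 : Type*} [NormedRing 𝔄]
    [NormedAlgebra 𝕜 𝔄] [CompleteSpace 𝔄]

lemma norm_exp_remainder {𝕜 : Type*} [RCLike 𝕜] [NormedAlgebra 𝕜 𝔄] (W : 𝔄) :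
    ‖exp W - 1 - W‖ ≤ Real.exp ‖W‖ - 1 - ‖W‖ := by
  have hs : Summable (fun k : ℕ => ((Nat.factorial k : 𝕜)⁻¹) • W ^ k) :=
    expSeries_summable' (𝕂 := 𝕜) W
  have hnorm : ∀ k : ℕ, ‖((Nat.factorial (k + 2) : 𝕜)⁻¹) • W ^ (k + 2)‖
      ≤ ‖W‖ ^ (k + 2) / (Nat.factorial (k + 2)) := by
    intro k
    rw [norm_smul, norm_inv, RCLike.norm_natCast]
    rw [div_eq_inv_mul]
    exact mul_le_mul_of_nonneg_left (norm_pow_le' W (by omega)) (by positivity)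
  have hsreal : Summable (fun k : ℕ => ‖W‖ ^ (k + 2) / (Nat.factorial (k + 2))) := by
    simpa using (summable_nat_add_iff 2).2 (Real.summable_pow_div_factorial ‖W‖)
  have key : exp W - 1 - W = ∑' k : ℕ, ((Nat.factorial (k + 2) : 𝕜)⁻¹) • W ^ (k + 2) := by
    have h := Summable.sum_add_tsum_nat_add 2 hs
    have hexp : exp W = ∑' k : ℕ, ((Nat.factorial k : 𝕜)⁻¹) • W ^ k := by
      rw [NormedSpace.exp_eq_tsum 𝕜]
    rw [hexp, ← h]
    simp [Finset.sum_range_succ]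
    abel
  rw [key, real_exp_tail]
  calc ‖∑' k : ℕ, ((Nat.factorial (k + 2) : 𝕜)⁻¹) • W ^ (k + 2)‖
      ≤ ∑' k : ℕ, ‖((Nat.factorial (k + 2) : 𝕜)⁻¹) • W ^ (k + 2)‖ := norm_tsum_le_tsum_norm
        (hsreal.of_nonneg_of_le (fun k => norm_nonneg _) hnorm)
    _ ≤ ∑' k : ℕ, ‖W‖ ^ (k + 2) / (Nat.factorial (k + 2)) :=
        Summable.tsum_le_tsum hnorm (hsreal.of_nonneg_of_le (fun k => norm_nonneg _) hnorm) hsreal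

/-- `IsGood u U a` says that `u` is approximated by `1 + U` with the same error bound as an
exponential of an element of norm at most `a`. -/
def IsGood (u U : 𝔄) (a : ℝ) : Prop := ‖U‖ ≤ a ∧ ‖u - 1 - U‖ ≤ Real.exp a - 1 - a

omit [CompleteSpace 𝔄] in
lemma isGood_mono {u U : 𝔄} {a b : ℝ} (h : IsGood u U a) (hab : a ≤ b) : IsGood u U b := by
  obtain ⟨h1, h2⟩ := h
  have ha : 0 ≤ a := le_trans (norm_nonneg _) h1
  refine ⟨h1.trans hab, h2.trans ?_⟩
  have h3 : Real.exp b = Real.exp a * Real.exp (b - a) := by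
    rw [← Real.exp_add]; ring_nf
  nlinarith [Real.add_one_le_exp (b - a), Real.one_le_exp ha]

lemma isGood_exp {𝕜 : Type*} [RCLike 𝕜] [NormedAlgebra 𝕜 𝔄] (W : 𝔄) : IsGood (exp W) W ‖W‖ :=
  ⟨le_refl _, norm_exp_remainder (𝕜 := 𝕜) W⟩

omit [CompleteSpace 𝔄] in
lemma isGood_one : IsGood (1 : 𝔄) 0 0 := by
  constructor <;> simp

omit [CompleteSpace 𝔄] in
lemma isGood_mul {u v U V : 𝔄} {a b : ℝ} (hu : IsGood u U a) (hv : IsGood v V b) :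
    IsGood (u * v) (U + V) (a + b) := by
  obtain ⟨hU, hu2⟩ := hu
  obtain ⟨hV, hv2⟩ := hv
  have ha : 0 ≤ a := le_trans (norm_nonneg _) hU
  have hb : 0 ≤ b := le_trans (norm_nonneg _) hV
  refine ⟨(norm_add_le U V).trans (add_le_add hU hV), ?_⟩
  have key : u * v - 1 - (U + V) =
      (u - 1 - U) * (v - 1 - V) + (u - 1 - U) * V + (u - 1 - U)
      + U * (v - 1 - V) + (v - 1 - V) + U * V := by noncomm_ring
  rw [key]
  have hα : 0 ≤ Real.exp a - 1 - a := by nlinarith [Real.add_one_le_exp a]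
  have hβ : 0 ≤ Real.exp b - 1 - b := by nlinarith [Real.add_one_le_exp b]
  calc ‖(u - 1 - U) * (v - 1 - V) + (u - 1 - U) * V + (u - 1 - U)
      + U * (v - 1 - V) + (v - 1 - V) + U * V‖
      ≤ ‖u - 1 - U‖ * ‖v - 1 - V‖ + ‖u - 1 - U‖ * ‖V‖ + ‖u - 1 - U‖
        + ‖U‖ * ‖v - 1 - V‖ + ‖v - 1 - V‖ + ‖U‖ * ‖V‖ := by
        refine le_trans (norm_add_le _ _) (add_le_add (le_trans (norm_add_le _ _)
          (add_le_add (le_trans (norm_add_le _ _) (add_le_add (le_trans (norm_add_le _ _)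
          (add_le_add (le_trans (norm_add_le _ _) (add_le_add (norm_mul_le _ _)
          (norm_mul_le _ _))) le_rfl)) (norm_mul_le _ _))) le_rfl)) (norm_mul_le _ _))
    _ ≤ (Real.exp a - 1 - a) * (Real.exp b - 1 - b) + (Real.exp a - 1 - a) * b
        + (Real.exp a - 1 - a) + a * (Real.exp b - 1 - b) + (Real.exp b - 1 - b) + a * b := by
        gcongr
    _ = Real.exp (a + b) - 1 - (a + b) := by rw [Real.exp_add]; ring

omit [CompleteSpace 𝔄] in
lemma isGood_pow {u U : 𝔄} {a : ℝ} (h : IsGood u U a) (k : ℕ) :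
    IsGood (u ^ k) (k • U) (k * a) := by
  induction k with
  | zero => simpa using isGood_one
  | succ k ih =>
      have h2 : ((k + 1 : ℕ) : ℝ) * a = (k : ℝ) * a + a := by push_cast; ring
      rw [pow_succ, succ_nsmul, h2]
      exact isGood_mul ih h

omit [CompleteSpace 𝔄] in
lemma isGood_norm_mul_le {u U : 𝔄} {a : ℝ} (h : IsGood u U a) (x : 𝔄) :
    ‖u * x‖ ≤ Real.exp a * ‖x‖ := by
  obtain ⟨hU, hu⟩ := h
  have key : u * x = (u - 1 - U) * x + x + U * x := by noncomm_ring
  rw [key]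
  calc ‖(u - 1 - U) * x + x + U * x‖ ≤ ‖u - 1 - U‖ * ‖x‖ + ‖x‖ + ‖U‖ * ‖x‖ :=
        le_trans (norm_add_le _ _) (add_le_add (le_trans (norm_add_le _ _)
          (add_le_add (norm_mul_le _ _) le_rfl)) (norm_mul_le _ _))
    _ ≤ (Real.exp a - 1 - a) * ‖x‖ + ‖x‖ + a * ‖x‖ := by
        gcongr
    _ = Real.exp a * ‖x‖ := by ring

omit [CompleteSpace 𝔄] in
lemma isGood_norm_mul_le' {u U : 𝔄} {a : ℝ} (h : IsGood u U a) (x : 𝔄) :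
    ‖x * u‖ ≤ Real.exp a * ‖x‖ := by
  obtain ⟨hU, hu⟩ := h
  have key : x * u = x * (u - 1 - U) + x + x * U := by noncomm_ring
  rw [key]
  calc ‖x * (u - 1 - U) + x + x * U‖ ≤ ‖x‖ * ‖u - 1 - U‖ + ‖x‖ + ‖x‖ * ‖U‖ :=
        le_trans (norm_add_le _ _) (add_le_add (le_trans (norm_add_le _ _)
          (add_le_add (norm_mul_le _ _) le_rfl)) (norm_mul_le _ _))
    _ ≤ ‖x‖ * (Real.exp a - 1 - a) + ‖x‖ + ‖x‖ * a := by
        gcongr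
    _ = Real.exp a * ‖x‖ := by ring

omit [CompleteSpace 𝔄] in
lemma isGood_norm_pow_sub_pow_le {u v U V : 𝔄} {a : ℝ} (hu : IsGood u U a) (hv : IsGood v V a) :
    ∀ k : ℕ, ‖u ^ k - v ^ k‖ ≤ k * Real.exp (k * a) * ‖u - v‖ := by
  have ha : 0 ≤ a := le_trans (norm_nonneg _) hu.1
  intro k
  induction k with
  | zero => simp
  | succ k ih =>
      have key : u ^ (k + 1) - v ^ (k + 1) = u ^ k * (u - v) + (u ^ k - v ^ k) * v := by
        rw [pow_succ, pow_succ]; noncomm_ring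
      rw [key]
      have e1 : Real.exp ((k : ℝ) * a) ≤ Real.exp (((k : ℕ) + 1 : ℝ) * a) := by
        apply Real.exp_le_exp.2; nlinarith
      have e2 : Real.exp a * Real.exp ((k : ℝ) * a) = Real.exp (((k : ℕ) + 1 : ℝ) * a) := by
        rw [← Real.exp_add]; congr 1; ring
      calc ‖u ^ k * (u - v) + (u ^ k - v ^ k) * v‖
          ≤ ‖u ^ k * (u - v)‖ + ‖(u ^ k - v ^ k) * v‖ := norm_add_le _ _
        _ ≤ Real.exp ((k : ℝ) * a) * ‖u - v‖ + Real.exp a * ‖u ^ k - v ^ k‖ :=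
            add_le_add (isGood_norm_mul_le (isGood_pow hu k) _)
              (isGood_norm_mul_le' hv _)
        _ ≤ Real.exp (((k : ℕ) + 1 : ℝ) * a) * ‖u - v‖
            + Real.exp a * ((k : ℝ) * Real.exp ((k : ℝ) * a) * ‖u - v‖) := by
            gcongr
        _ = (((k : ℕ) + 1 : ℝ)) * Real.exp (((k : ℕ) + 1 : ℝ) * a) * ‖u - v‖ := by
            rw [show Real.exp a * ((k : ℝ) * Real.exp ((k : ℝ) * a) * ‖u - v‖)
              = (k : ℝ) * (Real.exp a * Real.exp ((k : ℝ) * a)) * ‖u - v‖ by ring, e2]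
            ring
        _ = ((k + 1 : ℕ) : ℝ) * Real.exp (((k + 1 : ℕ) : ℝ) * a) * ‖u - v‖ := by push_cast; ring

end IsGoodFramework

/-- `fString 𝕜 A m n` is the symmetrized product string
`exp(A_m/(2n)) ⋯ exp(A₂/(2n)) · exp(A₁/n) · exp(A₂/(2n)) ⋯ exp(A_m/(2n))`,
where the elements are `A 1, …, A m`. -/
noncomputable def fString (𝕜 : Type*) [RCLike 𝕜] {𝔄 : Type*} [NormedRing 𝔄]
    [NormedAlgebra 𝕜 𝔄] (A : ℕ → 𝔄) (m n : ℕ) : 𝔄 :=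
  ((List.range' 2 (m - 1)).foldl
    (fun acc j => exp ((2 * n : 𝕜)⁻¹ • A j) * acc * exp ((2 * n : 𝕜)⁻¹ • A j))
    (exp ((n : 𝕜)⁻¹ • A 1)))

section MainLemmas

variable {𝕜 : Type*} [RCLike 𝕜] {𝔄 : Type*} [NormedRing 𝔄]
    [NormedAlgebra 𝕜 𝔄] [CompleteSpace 𝔄]

omit [CompleteSpace 𝔄] in
lemma fString_succ (A : ℕ → 𝔄) (n m : ℕ) (hm : 1 ≤ m) :
    fString 𝕜 A (m + 1) n = exp ((2 * n : 𝕜)⁻¹ • A (m + 1)) * fString 𝕜 A m n *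
      exp ((2 * n : 𝕜)⁻¹ • A (m + 1)) := by
  unfold fString
  obtain ⟨k, rfl⟩ := Nat.exists_eq_add_of_le hm
  have h1 : 1 + k + 1 - 1 = k + 1 := by omega
  have h2 : 1 + k - 1 = k := by omega
  have h3 : 2 + 1 * k = 1 + k + 1 := by omega
  rw [h1, h2, List.range'_concat, h3, List.foldl_append]
  simp only [List.foldl_cons, List.foldl_nil]

lemma isGood_fString (A : ℕ → 𝔄) (n : ℕ) (hn : 0 < n) :
    ∀ m, 1 ≤ m → IsGood (fString 𝕜 A m n) ((n : 𝕜)⁻¹ • ∑ j ∈ Finset.Icc 1 m, A j)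
      ((∑ j ∈ Finset.Icc 1 m, ‖A j‖) / n) := by
  have hnR : (0:ℝ) < (n : ℝ) := by exact_mod_cast hn
  have hnk : (n : 𝕜) ≠ 0 := Nat.cast_ne_zero.2 hn.ne'
  intro m
  induction m with
  | zero => intro h; omega
  | succ m ih =>
      intro _
      by_cases hm : m = 0
      · subst hm
        have hfs : fString 𝕜 A 1 n = exp ((n : 𝕜)⁻¹ • A 1) := by
          simp [fString]
        rw [hfs]
        have hnorm : ‖(n : 𝕜)⁻¹ • A 1‖ = ‖A 1‖ / n := by
          rw [norm_smul, norm_inv, RCLike.norm_natCast, div_eq_inv_mul]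
        have := isGood_exp (𝕜 := 𝕜) ((n : 𝕜)⁻¹ • A 1)
        rw [hnorm] at this
        simpa using this
      · have hm1 : 1 ≤ m := by omega
        rw [fString_succ A n m hm1]
        have hEnorm : ‖(2 * (n : 𝕜))⁻¹ • A (m + 1)‖ = ‖A (m + 1)‖ / (2 * n) := by
          rw [norm_smul, norm_inv, norm_mul, RCLike.norm_natCast, div_eq_inv_mul]
          norm_num
        have hE := isGood_exp (𝕜 := 𝕜) ((2 * (n : 𝕜))⁻¹ • A (m + 1))
        rw [hEnorm] at hE
        have step := isGood_mul (isGood_mul hE (ih hm1)) hE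
        have hU : (2 * (n : 𝕜))⁻¹ • A (m + 1) + (n : 𝕜)⁻¹ • ∑ j ∈ Finset.Icc 1 m, A j
            + (2 * (n : 𝕜))⁻¹ • A (m + 1)
            = (n : 𝕜)⁻¹ • ∑ j ∈ Finset.Icc 1 (m + 1), A j := by
          rw [Finset.sum_Icc_succ_top (by omega : 1 ≤ m + 1), smul_add]
          have hc : (n : 𝕜)⁻¹ • A (m + 1)
              = (2 * (n : 𝕜))⁻¹ • A (m + 1) + (2 * (n : 𝕜))⁻¹ • A (m + 1) := by
            rw [← add_smul]
            congr 1
            field_simp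
            ring
          rw [hc]
          abel
        have ha : ‖A (m + 1)‖ / (2 * n) + (∑ j ∈ Finset.Icc 1 m, ‖A j‖) / n
            + ‖A (m + 1)‖ / (2 * n)
            = (∑ j ∈ Finset.Icc 1 (m + 1), ‖A j‖) / n := by
          rw [Finset.sum_Icc_succ_top (by omega : 1 ≤ m + 1)]
          field_simp
          ring
        rw [hU, ha] at step
        exact step

end MainLemmas

theorem suzuki_fString_estimate_ii (𝕜 : Type*) [RCLike 𝕜] {𝔄 : Type*} [NormedRing 𝔄]
    [NormedAlgebra 𝕜 𝔄] [CompleteSpace 𝔄] (m : ℕ) (hm : 1 ≤ m) (A : ℕ → 𝔄)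
    (n : ℕ) (hn : 0 < n) :
    ‖exp (∑ j ∈ Finset.Icc 1 m, A j) - (fString 𝕜 A m n) ^ n‖ ≤
      (2 * (3 : ℝ) ^ m / (n : ℝ)) * (∑ j ∈ Finset.Icc 1 m, ‖A j‖) ^ 2 *
        Real.exp ((((n : ℝ) + 2) / (n : ℝ)) * ∑ j ∈ Finset.Icc 1 m, ‖A j‖) := by
  have hnR : (0:ℝ) < (n : ℝ) := by exact_mod_cast hn
  have hnk : (n : 𝕜) ≠ 0 := Nat.cast_ne_zero.2 hn.ne'
  set S : 𝔄 := ∑ j ∈ Finset.Icc 1 m, A j with hS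
  set s : ℝ := ∑ j ∈ Finset.Icc 1 m, ‖A j‖ with hs_def
  have hs : 0 ≤ s := Finset.sum_nonneg (fun j _ => norm_nonneg _)
  set t : ℝ := s / n with ht_def
  have ht : 0 ≤ t := div_nonneg hs hnR.le
  set U : 𝔄 := (n : 𝕜)⁻¹ • S with hU_def
  -- the two factors are good
  have hF : IsGood (fString 𝕜 A m n) U t := isGood_fString A n hn m hm
  have hG : IsGood (exp U) U t := by
    refine isGood_mono (isGood_exp (𝕜 := 𝕜) U) ?_
    rw [hU_def, norm_smul, norm_inv, RCLike.norm_natCast, ht_def, div_eq_inv_mul]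
    exact mul_le_mul_of_nonneg_left (norm_sum_le _ _) (by positivity)
  -- exp S is the n-th power of exp U
  have hexpS : exp S = (exp U) ^ n := by
    letI : NormedAlgebra ℚ 𝔄 := NormedAlgebra.restrictScalars ℚ 𝕜 𝔄
    rw [← exp_nsmul, hU_def, ← Nat.cast_smul_eq_nsmul 𝕜, smul_smul, mul_inv_cancel₀ hnk, one_smul]
  -- one-step difference
  have hdiff : ‖exp U - fString 𝕜 A m n‖ ≤ 2 * (Real.exp t - 1 - t) := by
    have hsplit : exp U - fString 𝕜 A m n
        = (exp U - 1 - U) - (fString 𝕜 A m n - 1 - U) := by abel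
    rw [hsplit]
    calc ‖(exp U - 1 - U) - (fString 𝕜 A m n - 1 - U)‖
        ≤ ‖exp U - 1 - U‖ + ‖fString 𝕜 A m n - 1 - U‖ := norm_sub_le _ _
      _ ≤ (Real.exp t - 1 - t) + (Real.exp t - 1 - t) := add_le_add hG.2 hF.2
      _ = 2 * (Real.exp t - 1 - t) := by ring
  -- telescoping estimate
  have htele := isGood_norm_pow_sub_pow_le hG hF n
  have hmain : ‖exp S - (fString 𝕜 A m n) ^ n‖
      ≤ (n : ℝ) * Real.exp ((n : ℝ) * t) * (2 * (Real.exp t - 1 - t)) := by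
    rw [hexpS]
    refine le_trans htele ?_
    exact mul_le_mul_of_nonneg_left hdiff (by positivity)
  refine hmain.trans ?_
  -- now a purely real computation
  have hrem : 2 * (Real.exp t - 1 - t) ≤ t ^ 2 * Real.exp t := by
    have := real_exp_remainder ht
    linarith
  have hnt : (n : ℝ) * t = s := by
    rw [ht_def]; field_simp
  calc (n : ℝ) * Real.exp ((n : ℝ) * t) * (2 * (Real.exp t - 1 - t))
      ≤ (n : ℝ) * Real.exp ((n : ℝ) * t) * (t ^ 2 * Real.exp t) := by
        refine mul_le_mul_of_nonneg_left hrem (by positivity)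
    _ = (n : ℝ) * t ^ 2 * Real.exp ((n : ℝ) * t + t) := by
        rw [Real.exp_add]; ring
    _ = s ^ 2 / n * Real.exp (s + s / n) := by
        rw [hnt, ht_def]; field_simp
    _ ≤ 2 * (3 : ℝ) ^ m / (n : ℝ) * s ^ 2 * Real.exp (((n : ℝ) + 2) / (n : ℝ) * s) := by
        have h1 : Real.exp (s + s / n) ≤ Real.exp (((n : ℝ) + 2) / (n : ℝ) * s) := by
          apply Real.exp_le_exp.2
          have heq : ((n : ℝ) + 2) / (n : ℝ) * s = s + 2 * (s / n) := by
            field_simp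
          rw [heq]
          have : 0 ≤ s / n := div_nonneg hs hnR.le
          linarith
        have h2 : (1:ℝ) ≤ 2 * (3 : ℝ) ^ m := by
          have : (1:ℝ) ≤ (3:ℝ) ^ m := one_le_pow₀ (by norm_num)
          linarith
        calc s ^ 2 / n * Real.exp (s + s / n)
            ≤ s ^ 2 / n * Real.exp (((n : ℝ) + 2) / (n : ℝ) * s) := by
              refine mul_le_mul_of_nonneg_left h1 (by positivity)
          _ ≤ 2 * (3 : ℝ) ^ m / (n : ℝ) * s ^ 2 * Real.exp (((n : ℝ) + 2) / (n : ℝ) * s) := by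
              refine mul_le_mul_of_nonneg_right ?_ (Real.exp_pos _).le
              rw [div_eq_mul_inv, div_eq_mul_inv]
              nlinarith [sq_nonneg s, inv_nonneg.2 hnR.le, h2,
                mul_nonneg (sq_nonneg s) (inv_nonneg.2 hnR.le)]
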